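/- If a weak composition a = (a₁,...,a_ℓ) has two nonzero entries 0 < a_i < a_j with i < j, then there exist at least two distinct quasi-Yamanouchi Kohnert tableaux of content a; equivalently the key polynomial κ_a has at least two terms in its fundamental slide expansion. -/

import Mathlib

/-- `b` dominates `a`: every partial sum of `b` is at least that of `a`. -/
def Dominates (b a : List ℕ) : Prop :=
  ∀ i : ℕ, (a.take i).sum ≤ (b.take i).sum

/-- `flatten a` removes the zero parts of a weak composition. -/
def Flatten (a : List ℕ) : List ℕ := a.filter (· != 0)

/-- `β` refines `α`: `β` decomposes into consecutive nonempty blocks whose sums give `α`. -/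
def Refines (β α : List ℕ) : Prop :=
  ∃ L : List (List ℕ), (∀ l ∈ L, l ≠ []) ∧ L.flatten = β ∧ L.map List.sum = α

/-- The set of inversions of a composition: pairs `i < j` with `α i < α j`. -/
def invSet (α : List ℕ) : Finset (Fin α.length × Fin α.length) :=
  Finset.univ.filter fun p => p.1 < p.2 ∧ α.get p.1 < α.get p.2

/-- Kohnert tableau of content `a`, encoded as a filling `T : (row, col) → entry`,
with `0` meaning an empty position, rows and columns indexed from `1`. -/
def IsKohnert (a : List ℕ) (T : ℕ × ℕ → ℕ) : Prop :=
  -- cells live at positive coordinates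
  (∀ r c, T (r, c) ≠ 0 → 1 ≤ r ∧ 1 ≤ c) ∧
  -- entries are among 1,…,ℓ
  (∀ r c, T (r, c) ≠ 0 → 1 ≤ T (r, c) ∧ T (r, c) ≤ a.length) ∧
  -- (i) for each i there is exactly one i in each column 1,…,aᵢ and none beyond
  (∀ i, 1 ≤ i → i ≤ a.length → ∀ c, 1 ≤ c →
    (c ≤ a.getD (i - 1) 0 → ∃! r, T (r, c) = i) ∧
    (a.getD (i - 1) 0 < c → ∀ r, T (r, c) ≠ i)) ∧
  -- (ii) each entry in row r is at least r
  (∀ r c, T (r, c) ≠ 0 → r ≤ T (r, c)) ∧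
  -- (iii) the cells filled with a given entry weakly descend from left to right
  (∀ r c r' c', T (r, c) ≠ 0 → T (r, c) = T (r', c') → c < c' → r' ≤ r) ∧
  -- (iv) if i < j share a column with i above j, there is an i in the next column,
  -- strictly above the cell containing j
  (∀ r r' c, T (r, c) ≠ 0 → T (r', c) ≠ 0 → T (r, c) < T (r', c) → r' < r →
    ∃ r'', r' < r'' ∧ T (r'', c + 1) = T (r, c))

/-- Quasi-Yamanouchi Kohnert tableau: additionally (v) every nonempty row `r` contains
the entry `r`, or has a cell in row `r+1` weakly right of one of its cells. -/
def IsQYKohnert (a : List ℕ) (T : ℕ × ℕ → ℕ) : Prop :=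
  IsKohnert a T ∧
  ∀ r, 1 ≤ r → (∃ c, T (r, c) ≠ 0) →
    ((∃ c, T (r, c) = r) ∨ ∃ c c', T (r, c) ≠ 0 ∧ T (r + 1, c') ≠ 0 ∧ c ≤ c')

/-- The weight of a filling: the list recording the number of cells in each row `1,…,ℓ`. -/
def wtList (a : List ℕ) (T : ℕ × ℕ → ℕ) : List ℕ :=
  (List.range a.length).map fun r =>
    ((Finset.Icc 1 a.sum).filter fun c => T (r + 1, c) ≠ 0).card

open Classical in
/-- Coefficient of the monomial `x^b` in the fundamental slide polynomial `𝔉_a`. -/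
noncomputable def fundCoeff (a b : List ℕ) : ℕ :=
  if b.length = a.length ∧ Dominates b a ∧ Refines (Flatten b) (Flatten a) then 1 else 0

/-- Coefficient of the monomial `x^b` in the key polynomial `κ_a`:
the number of Kohnert tableaux of content `a` and weight `b`. -/
noncomputable def keyCoeff (a b : List ℕ) : ℕ :=
  Set.ncard {T : ℕ × ℕ → ℕ | IsKohnert a T ∧ wtList a T = b}

/-- The basic filling of content `a`: `aᵢ` cells filled with `i` in row `i`, columns `1,…,aᵢ`. -/
def basicFilling (a : List ℕ) : ℕ × ℕ → ℕ := fun p =>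
  if 1 ≤ p.1 ∧ p.1 ≤ a.length ∧ 1 ≤ p.2 ∧ p.2 ≤ a.getD (p.1 - 1) 0 then p.1 else 0

/-- `κ_α` is multiplicity free in the fundamental slide basis: quasi-Yamanouchi
Kohnert tableaux of content `α` have pairwise distinct weights. -/
def MultFree (α : List ℕ) : Prop :=
  ∀ T₁ T₂ : ℕ × ℕ → ℕ, IsQYKohnert α T₁ → IsQYKohnert α T₂ →
    wtList α T₁ = wtList α T₂ → T₁ = T₂

lemma basic_spec (a : List ℕ) (r c : ℕ) :
    basicFilling a (r, c) =
      if 1 ≤ r ∧ r ≤ a.length ∧ 1 ≤ c ∧ c ≤ a.getD (r - 1) 0 then r else 0 := rfl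

lemma basic_val (a : List ℕ) (r c : ℕ) :
    basicFilling a (r, c) = 0 ∨ basicFilling a (r, c) = r := by
  rw [basic_spec]; split_ifs <;> simp

lemma basic_ne_iff (a : List ℕ) (r c : ℕ) :
    basicFilling a (r, c) ≠ 0 ↔
      (1 ≤ r ∧ r ≤ a.length ∧ 1 ≤ c ∧ c ≤ a.getD (r - 1) 0) := by
  rw [basic_spec]; split_ifs with h
  · exact iff_of_true (by omega) h
  · exact iff_of_false (by simp) h

lemma basic_eq (a : List ℕ) (r c : ℕ)
    (h : 1 ≤ r ∧ r ≤ a.length ∧ 1 ≤ c ∧ c ≤ a.getD (r - 1) 0) :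
    basicFilling a (r, c) = r := by
  rw [basic_spec, if_pos h]

lemma basic_qy (a : List ℕ) : IsQYKohnert a (basicFilling a) := by
  refine ⟨⟨?_, ?_, ?_, ?_, ?_, ?_⟩, ?_⟩
  · intro r c h
    have h2 := (basic_ne_iff a r c).1 h
    exact ⟨h2.1, h2.2.2.1⟩
  · intro r c h
    have h2 := (basic_ne_iff a r c).1 h
    rcases basic_val a r c with h3 | h3
    · exact absurd h3 h
    · rw [h3]; exact ⟨h2.1, h2.2.1⟩
  · intro v hv1 hv2 c hc
    constructor
    · intro hcle
      refine ⟨v, basic_eq a v c ⟨hv1, hv2, hc, hcle⟩, ?_⟩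
      intro r hr
      rcases basic_val a r c with h3 | h3 <;> rw [h3] at hr <;> omega
    · intro hgt r hr
      rcases basic_val a r c with h3 | h3 <;> rw [h3] at hr
      · omega
      · subst hr
        have h4 := (basic_ne_iff a r c).1 (by rw [h3]; omega)
        omega
  · intro r c h
    rcases basic_val a r c with h3 | h3
    · exact absurd h3 h
    · omega
  · intro r c r' c' h he hcc
    rcases basic_val a r c with h3 | h3
    · exact absurd h3 h
    rcases basic_val a r' c' with h4 | h4 <;> rw [h3, h4] at he
    · have h2 := (basic_ne_iff a r c).1 h
      omega
    · omega
  · intro r r' c h h' hv hrr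
    exfalso
    rcases basic_val a r c with h3 | h3
    · exact absurd h3 h
    rcases basic_val a r' c with h4 | h4
    · exact absurd h4 h'
    rw [h3, h4] at hv; omega
  · intro r hr hne
    left
    obtain ⟨c, hc⟩ := hne
    have h2 := (basic_ne_iff a r c).1 hc
    exact ⟨1, basic_eq a r 1 ⟨h2.1, h2.2.1, le_refl 1, by omega⟩⟩

/-- The modified filling: entries `j+1` in columns `a_i+1, …, a_j` are moved up to row `i+1`. -/
def T2 (a : List ℕ) (i j : Fin a.length) : ℕ × ℕ → ℕ := fun p =>
  if p.1 = (i : ℕ) + 1 ∧ a.get i < p.2 ∧ p.2 ≤ a.get j then (j : ℕ) + 1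
  else if p.1 = (j : ℕ) + 1 ∧ a.get i < p.2 then 0
  else basicFilling a p

lemma T2_eq1 (a : List ℕ) (i j : Fin a.length) (r c : ℕ)
    (h : r = (i : ℕ) + 1 ∧ a.get i < c ∧ c ≤ a.get j) :
    T2 a i j (r, c) = (j : ℕ) + 1 := by
  show (if r = (i : ℕ) + 1 ∧ a.get i < c ∧ c ≤ a.get j then _ else _) = _
  rw [if_pos h]

lemma T2_eq3 (a : List ℕ) (i j : Fin a.length) (r c : ℕ)
    (h1 : ¬(r = (i : ℕ) + 1 ∧ a.get i < c ∧ c ≤ a.get j))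
    (h2 : ¬(r = (j : ℕ) + 1 ∧ a.get i < c)) :
    T2 a i j (r, c) = basicFilling a (r, c) := by
  show (if r = (i : ℕ) + 1 ∧ a.get i < c ∧ c ≤ a.get j then _ else _) = _
  rw [if_neg h1, if_neg h2]

lemma getD_get (a : List ℕ) (i : Fin a.length) : a.getD (i : ℕ) 0 = a.get i := by
  rw [List.getD_eq_getElem _ _ i.isLt, List.get_eq_getElem]

lemma T2_cases (a : List ℕ) (i j : Fin a.length) (r c : ℕ) :
    (T2 a i j (r, c) = (j : ℕ) + 1 ∧ r = (i : ℕ) + 1 ∧ a.get i < c ∧ c ≤ a.get j)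
    ∨ T2 a i j (r, c) = 0
    ∨ (T2 a i j (r, c) = r ∧ 1 ≤ r ∧ r ≤ a.length ∧ 1 ≤ c ∧ c ≤ a.getD (r - 1) 0
        ∧ ¬(r = (i : ℕ) + 1 ∧ a.get i < c) ∧ ¬(r = (j : ℕ) + 1 ∧ a.get i < c)) := by
  by_cases h1 : r = (i : ℕ) + 1 ∧ a.get i < c ∧ c ≤ a.get j
  · exact Or.inl ⟨T2_eq1 a i j r c h1, h1⟩
  by_cases h2 : r = (j : ℕ) + 1 ∧ a.get i < c
  · refine Or.inr (Or.inl ?_)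
    show (if r = (i : ℕ) + 1 ∧ a.get i < c ∧ c ≤ a.get j then _ else _) = _
    rw [if_neg h1, if_pos h2]
  have h3 := T2_eq3 a i j r c h1 h2
  rcases basic_val a r c with h4 | h4
  · exact Or.inr (Or.inl (h3.trans h4))
  by_cases hr0 : r = 0
  · refine Or.inr (Or.inl ?_)
    rw [h3, h4, hr0]
  have h5 := (basic_ne_iff a r c).1 (by rw [h4]; exact hr0)
  refine Or.inr (Or.inr ⟨h3.trans h4, h5.1, h5.2.1, h5.2.2.1, h5.2.2.2, ?_, h2⟩)
  rintro ⟨hrI, hcc⟩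
  have : a.getD (r - 1) 0 = a.get i := by rw [hrI]; simpa using getD_get a i
  omega

lemma T2_qy (a : List ℕ) (i j : Fin a.length) (hij : (i : ℕ) < (j : ℕ))
    (h0 : 0 < a.get i) (hlt : a.get i < a.get j)
    (hmin : ∀ r : ℕ, (i : ℕ) + 1 < r → r < (j : ℕ) + 1 → a.getD (r - 1) 0 ≤ a.get i) :
    IsQYKohnert a (T2 a i j) := by
  have hi : (i : ℕ) < a.length := i.isLt
  have hj : (j : ℕ) < a.length := j.isLt
  have hgI : a.getD ((i : ℕ)) 0 = a.get i := getD_get a i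
  have hgJ : a.getD ((j : ℕ)) 0 = a.get j := getD_get a j
  refine ⟨⟨?_, ?_, ?_, ?_, ?_, ?_⟩, ?_⟩
  · intro r c h
    rcases T2_cases a i j r c with h1 | h1 | h1
    · omega
    · exact absurd h1 h
    · omega
  · intro r c h
    rcases T2_cases a i j r c with h1 | h1 | h1
    · omega
    · exact absurd h1 h
    · omega
  · intro v hv1 hv2 c hc
    constructor
    · intro hcle
      by_cases hvJ : v = (j : ℕ) + 1
      · have hcAJ : c ≤ a.get j := by
          subst hvJ; simp only [Nat.add_sub_cancel] at hcle; omega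
        by_cases hcI : c ≤ a.get i
        · -- witness r = j+1
          refine ⟨(j : ℕ) + 1, ?_, ?_⟩
          · show T2 a i j ((j : ℕ) + 1, c) = v
            rw [T2_eq3 a i j _ c (by omega) (by omega), hvJ]
            exact basic_eq a _ c ⟨by omega, by omega, hc, by simpa [hgJ] using hcAJ⟩
          · intro r hr
            rcases T2_cases a i j r c with h1 | h1 | h1 <;> omega
        · -- witness r = i+1
          refine ⟨(i : ℕ) + 1, ?_, ?_⟩
          · show T2 a i j ((i : ℕ) + 1, c) = v
            rw [T2_eq1 a i j _ c ⟨rfl, by omega, hcAJ⟩, hvJ]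
          · intro r hr
            rcases T2_cases a i j r c with h1 | h1 | h1 <;> omega
      · -- witness r = v
        refine ⟨v, ?_, ?_⟩
        · have hIc : ¬(v = (i : ℕ) + 1 ∧ a.get i < c ∧ c ≤ a.get j) := by
            rintro ⟨hvI, hac, -⟩
            rw [hvI] at hcle
            simp only [Nat.add_sub_cancel, hgI] at hcle
            omega
          show T2 a i j (v, c) = v
          rw [T2_eq3 a i j v c hIc (by omega)]
          exact basic_eq a v c ⟨hv1, hv2, hc, hcle⟩
        · intro r hr
          rcases T2_cases a i j r c with h1 | h1 | h1 <;> omega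
    · intro hgt r hr
      rcases T2_cases a i j r c with h1 | h1 | h1
      · -- value j+1, so v = j+1, but c ≤ a_j = getD(v-1) < c
        have hvJ : v = (j : ℕ) + 1 := by omega
        rw [hvJ] at hgt
        simp only [Nat.add_sub_cancel, hgJ] at hgt
        omega
      · omega
      · have hrv : r = v := by omega
        subst hrv
        omega
  · intro r c h
    rcases T2_cases a i j r c with h1 | h1 | h1 <;> omega
  · intro r c r' c' h he hcc
    rcases T2_cases a i j r c with h1 | h1 | h1
    · rcases T2_cases a i j r' c' with h2 | h2 | h2 <;> omega
    · exact absurd h1 h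
    · rcases T2_cases a i j r' c' with h2 | h2 | h2 <;> omega
  · intro r r' c h h' hv hrr
    exfalso
    rcases T2_cases a i j r c with h1 | h1 | h1
    · rcases T2_cases a i j r' c with h2 | h2 | h2 <;> omega
    · exact absurd h1 h
    · rcases T2_cases a i j r' c with h2 | h2 | h2
      · -- r' = i+1 with value j+1, r has value r, i+1 < r < j+1, c > a_i, c ≤ getD (r-1)
        have := hmin r (by omega) (by omega)
        omega
      · exact absurd h2 h'
      · omega
  · intro r hr hne
    left
    obtain ⟨c, hc⟩ := hne
    have key : ∀ r', 1 ≤ r' → r' ≤ a.length → 1 ≤ a.getD (r' - 1) 0 →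
        T2 a i j (r', 1) = r' := by
      intro r' h1 h2 h3
      rw [T2_eq3 a i j r' 1 (by omega) (by omega)]
      exact basic_eq a r' 1 ⟨h1, h2, le_refl 1, h3⟩
    rcases T2_cases a i j r c with h1 | h1 | h1
    · refine ⟨1, ?_⟩
      have : r = (i : ℕ) + 1 := h1.2.1
      rw [this]
      exact key _ (by omega) (by omega) (by rw [Nat.add_sub_cancel, hgI]; exact h0)
    · exact absurd h1 hc
    · exact ⟨1, key r h1.2.1 h1.2.2.1 (by omega)⟩

lemma wt_row (a : List ℕ) (T : ℕ × ℕ → ℕ) (r m : ℕ) (hr : r < a.length) (hm : m ≤ a.sum)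
    (h : ∀ c, 1 ≤ c → (T (r + 1, c) ≠ 0 ↔ c ≤ m)) :
    (wtList a T).getD r 0 = m := by
  unfold wtList
  rw [List.getD_eq_getElem _ _ (by simpa using hr), List.getElem_map, List.getElem_range]
  have he : ((Finset.Icc 1 a.sum).filter fun c => T (r + 1, c) ≠ 0) = Finset.Icc 1 m := by
    ext c
    simp only [Finset.mem_filter, Finset.mem_Icc]
    constructor
    · rintro ⟨⟨h1, h2⟩, h3⟩
      exact ⟨h1, (h c h1).1 h3⟩
    · rintro ⟨h1, h2⟩
      exact ⟨⟨h1, h2.trans hm⟩, (h c h1).2 h2⟩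
  rw [he, Nat.card_Icc]
  omega

lemma get_le_sum (a : List ℕ) (k : Fin a.length) : a.get k ≤ a.sum :=
  List.single_le_sum (fun x _ => Nat.zero_le x) _ (by rw [List.get_eq_getElem]; exact a.getElem_mem k.isLt)

lemma key_lemma (a : List ℕ) (i j : Fin a.length) (hij : (i : ℕ) < (j : ℕ))
    (h0 : 0 < a.get i) (hlt : a.get i < a.get j)
    (hmin : ∀ r : ℕ, (i : ℕ) + 1 < r → r < (j : ℕ) + 1 → a.getD (r - 1) 0 ≤ a.get i) :
    ∃ T₁ T₂ : ℕ × ℕ → ℕ, IsQYKohnert a T₁ ∧ IsQYKohnert a T₂ ∧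
      T₁ ≠ T₂ ∧ wtList a T₁ ≠ wtList a T₂ := by
  have hi : (i : ℕ) < a.length := i.isLt
  have hgI : a.getD ((i : ℕ)) 0 = a.get i := getD_get a i
  have hw1 : (wtList a (basicFilling a)).getD (i : ℕ) 0 = a.get i := by
    apply wt_row a _ _ _ hi (get_le_sum a i)
    intro c hc
    rw [basic_ne_iff]
    constructor
    · rintro ⟨-, -, -, h4⟩
      simpa [hgI] using h4
    · intro h
      exact ⟨by omega, by omega, hc, by simpa [hgI] using h⟩
  have hw2 : (wtList a (T2 a i j)).getD (i : ℕ) 0 = a.get j := by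
    apply wt_row a _ _ _ hi (get_le_sum a j)
    intro c hc
    constructor
    · intro h
      rcases T2_cases a i j ((i : ℕ) + 1) c with h1 | h1 | h1
      · exact h1.2.2.2
      · exact absurd h1 h
      · simp only [Nat.add_sub_cancel, hgI] at h1
        omega
    · intro h
      by_cases hcI : c ≤ a.get i
      · rw [T2_eq3 a i j _ c (by omega) (by omega),
          basic_eq a _ c ⟨by omega, by omega, hc, by simpa [hgI] using hcI⟩]
        omega
      · rw [T2_eq1 a i j _ c ⟨rfl, by omega, h⟩]
        omega
  have hwne : wtList a (basicFilling a) ≠ wtList a (T2 a i j) := by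
    intro h
    rw [h, hw2] at hw1
    omega
  exact ⟨basicFilling a, T2 a i j, basic_qy a, T2_qy a i j hij h0 hlt hmin,
    fun h => hwne (by rw [h]), hwne⟩

/-- if a weak composition has two nonzero entries `0 < aᵢ < aⱼ` with
`i < j`, then there are two distinct quasi-Yamanouchi Kohnert tableaux of content `a`,
of different weights, so `κ_a` has at least two fundamental slide terms. -/
theorem stmt11 (a : List ℕ) (i j : Fin a.length) (hij : i < j)
    (h0 : 0 < a.get i) (hlt : a.get i < a.get j) :
    ∃ T₁ T₂ : ℕ × ℕ → ℕ, IsQYKohnert a T₁ ∧ IsQYKohnert a T₂ ∧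
      T₁ ≠ T₂ ∧ wtList a T₁ ≠ wtList a T₂ := by

  have H : ∀ n : ℕ, ∀ i j : Fin a.length, (j : ℕ) - (i : ℕ) ≤ n → (i : ℕ) < (j : ℕ) →
      0 < a.get i → a.get i < a.get j →
      ∃ T₁ T₂ : ℕ × ℕ → ℕ, IsQYKohnert a T₁ ∧ IsQYKohnert a T₂ ∧
        T₁ ≠ T₂ ∧ wtList a T₁ ≠ wtList a T₂ := by
    intro n
    induction n with
    | zero => intro i j hle hij _ _; omega
    | succ n ih =>
      intro i j hle hij h0 hlt
      by_cases hm : ∀ r : ℕ, (i : ℕ) + 1 < r → r < (j : ℕ) + 1 → a.getD (r - 1) 0 ≤ a.get i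
      · exact key_lemma a i j hij h0 hlt hm
      · push_neg at hm
        obtain ⟨r, h1, h2, h3⟩ := hm
        have hrlt : r - 1 < a.length := by
          have := j.isLt
          omega
        refine ih i ⟨r - 1, hrlt⟩ (by simp; omega) (by simp; omega) h0 ?_
        have : a.get ⟨r - 1, hrlt⟩ = a.getD (r - 1) 0 := (getD_get a ⟨r - 1, hrlt⟩).symm
        omega
  exact H ((j : ℕ) - (i : ℕ)) i j le_rfl hij h0 hlt
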